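/- Assume X_0 = {x₀} is a singleton with μ_0 the point mass at x₀, w_0 ≡ 1, and for each t ∈ {1,…,h} a function w_t ∈ H_t satisfies the exact population matching equations ⟨w_t, f⟩_{μ_t} = Σ_{x∈X_{t−1}} μ_{t−1}(x)·w_{t−1}(x)·(P_{t−1}f)(x) for all f ∈ H_t. Then for every f ∈ H_h, |⟨w_h, f⟩_{μ_h}| ≤ ‖K_1 K_2 ⋯ K_{h−1} f‖_∞; in particular sup{ |⟨w_h,f⟩_{μ_h}| : f ∈ H_h, ‖f‖_∞ ≤ 1 } ≤ ρ_{1:h}, where ρ_{1:h} := sup{ ‖K_1 K_2 ⋯ K_{h−1} f‖_∞ : f ∈ H_h, ‖f‖_∞ ≤ 1 }. -/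
import Mathlib


open Finset

/-- Iterated projected backup: `KiterQMMR K t k = K_t ∘ K_{t+1} ∘ ⋯ ∘ K_{t+k−1}`,
mapping functions on layer `t+k` to functions on layer `t`. -/
def KiterQMMR {X : ℕ → Type} (K : ∀ t, (X (t + 1) → ℝ) → (X t → ℝ)) :
    ∀ (t k : ℕ), (X (t + k) → ℝ) → (X t → ℝ)
  | _, 0 => id
  | t, (k + 1) => fun f => KiterQMMR K t k (K (t + k) f)

section Aux
variable {X : ℕ → Type} [∀ t, Fintype (X t)]
  (μ : ∀ t, X t → ℝ)
  (P : ∀ t, X t → X (t + 1) → ℝ)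
  (Hs : ∀ t, Submodule ℝ (X t → ℝ))
  (hnorm : ∀ t, ∀ f ∈ Hs t, (∑ x, μ t x * f x ^ 2 = 0) → f = 0)
  (K : ∀ t, (X (t + 1) → ℝ) → (X t → ℝ))
  (hKmem : ∀ t f, K t f ∈ Hs t)
  (hKproj : ∀ t f, ∀ q ∈ Hs t,
      ∑ x, μ t x * ((∑ y, P t x y * f y) - K t f x) * q x = 0)

include hnorm hKmem hKproj in
lemma K_unique (t : ℕ) (f : X (t + 1) → ℝ) (g : X t → ℝ) (hg : g ∈ Hs t)
    (hgproj : ∀ q ∈ Hs t,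
      ∑ x, μ t x * ((∑ y, P t x y * f y) - g x) * q x = 0) : g = K t f := by
  have hd : (g - K t f) ∈ Hs t := sub_mem hg (hKmem t f)
  have key : ∀ q ∈ Hs t, ∑ x, μ t x * (g x - K t f x) * q x = 0 := by
    intro q hq
    have h1 := hgproj q hq
    have h2 := hKproj t f q hq
    have : ∑ x, μ t x * (g x - K t f x) * q x =
        (∑ x, μ t x * ((∑ y, P t x y * f y) - K t f x) * q x) -
        ∑ x, μ t x * ((∑ y, P t x y * f y) - g x) * q x := by
      rw [← Finset.sum_sub_distrib]
      exact Finset.sum_congr rfl fun x _ => by ring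
    rw [this, h1, h2, sub_zero]
  have hz : ∑ x, μ t x * (g x - K t f x) ^ 2 = 0 := by
    have := key (g - K t f) hd
    rw [← this]
    exact Finset.sum_congr rfl fun x _ => by simp [Pi.sub_apply]; ring
  have := hnorm t (g - K t f) hd hz
  have : g - K t f = 0 := this
  funext x
  have := congrFun this x
  simpa [Pi.sub_apply, sub_eq_zero] using this

include hnorm hKmem hKproj in
lemma K_add (t : ℕ) (f g : X (t + 1) → ℝ) :
    K t (f + g) = K t f + K t g := by
  refine (K_unique μ P Hs hnorm K hKmem hKproj t (f + g) (K t f + K t g)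
    (add_mem (hKmem t f) (hKmem t g)) ?_).symm
  intro q hq
  have h1 := hKproj t f q hq
  have h2 := hKproj t g q hq
  have : ∑ x, μ t x * ((∑ y, P t x y * (f + g) y) - (K t f + K t g) x) * q x =
      (∑ x, μ t x * ((∑ y, P t x y * f y) - K t f x) * q x) +
      ∑ x, μ t x * ((∑ y, P t x y * g y) - K t g x) * q x := by
    rw [← Finset.sum_add_distrib]
    refine Finset.sum_congr rfl fun x _ => ?_
    have : (∑ y, P t x y * (f + g) y) = (∑ y, P t x y * f y) + ∑ y, P t x y * g y := by
      rw [← Finset.sum_add_distrib]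
      exact Finset.sum_congr rfl fun y _ => by simp [Pi.add_apply]; ring
    rw [this]
    simp [Pi.add_apply]; ring
  rw [this, h1, h2, add_zero]

include hnorm hKmem hKproj in
lemma K_smul (t : ℕ) (c : ℝ) (f : X (t + 1) → ℝ) :
    K t (c • f) = c • K t f := by
  refine (K_unique μ P Hs hnorm K hKmem hKproj t (c • f) (c • K t f)
    (Submodule.smul_mem _ c (hKmem t f)) ?_).symm
  intro q hq
  have h1 := hKproj t f q hq
  have : ∑ x, μ t x * ((∑ y, P t x y * (c • f) y) - (c • K t f) x) * q x =
      c * ∑ x, μ t x * ((∑ y, P t x y * f y) - K t f x) * q x := by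
    rw [Finset.mul_sum]
    refine Finset.sum_congr rfl fun x _ => ?_
    have : (∑ y, P t x y * (c • f) y) = c * ∑ y, P t x y * f y := by
      rw [Finset.mul_sum]
      exact Finset.sum_congr rfl fun y _ => by simp [Pi.smul_apply]; ring
    rw [this]
    simp [Pi.smul_apply]; ring
  rw [this, h1, mul_zero]

include hnorm hKmem hKproj in
lemma Kiter_add (t : ℕ) : ∀ (k : ℕ) (f g : X (t + k) → ℝ),
    KiterQMMR K t k (f + g) = KiterQMMR K t k f + KiterQMMR K t k g := by
  intro k
  induction k with
  | zero => intro f g; rfl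
  | succ n ih =>
    intro f g
    show KiterQMMR K t n (K (t + n) (f + g)) = _
    rw [K_add μ P Hs hnorm K hKmem hKproj (t + n) f g, ih]
    rfl

include hnorm hKmem hKproj in
lemma Kiter_smul (t : ℕ) : ∀ (k : ℕ) (c : ℝ) (f : X (t + k) → ℝ),
    KiterQMMR K t k (c • f) = c • KiterQMMR K t k f := by
  intro k
  induction k with
  | zero => intro c f; rfl
  | succ n ih =>
    intro c f
    show KiterQMMR K t n (K (t + n) (c • f)) = _
    rw [K_smul μ P Hs hnorm K hKmem hKproj (t + n) c f, ih]
    rfl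

omit [∀ t, Fintype (X t)] in
include hKmem in
lemma Kiter_mem (t : ℕ) : ∀ (k : ℕ) (f : X (t + (k + 1)) → ℝ),
    KiterQMMR K t (k + 1) f ∈ Hs t := by
  intro k
  induction k with
  | zero => intro f; exact hKmem t f
  | succ n ih => intro f; exact ih (K (t + (n + 1)) f)

end Aux

section Chain
variable {X : ℕ → Type} [∀ t, Fintype (X t)]
  (μ : ∀ t, X t → ℝ)
  (P : ∀ t, X t → X (t + 1) → ℝ)
  (Hs : ∀ t, Submodule ℝ (X t → ℝ))
  (K : ∀ t, (X (t + 1) → ℝ) → (X t → ℝ))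
  (hKmem : ∀ t f, K t f ∈ Hs t)
  (hKproj : ∀ t f, ∀ q ∈ Hs t,
      ∑ x, μ t x * ((∑ y, P t x y * f y) - K t f x) * q x = 0)

include hKmem hKproj in
lemma chainQMMR : ∀ (k : ℕ) (w : ∀ t, X t → ℝ),
    (∀ t, 1 ≤ t → t ≤ 1 + k → w t ∈ Hs t) →
    (∀ t, t + 1 ≤ 1 + k → ∀ f ∈ Hs (t + 1),
      ∑ y, μ (t + 1) y * w (t + 1) y * f y =
        ∑ x, μ t x * w t x * ∑ y, P t x y * f y) →
    ∀ f ∈ Hs (1 + k),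
      ∑ y, μ (1 + k) y * w (1 + k) y * f y =
        ∑ y, μ 1 y * w 1 y * KiterQMMR K 1 k f y := by
  intro k
  induction k with
  | zero => intro w _ _ f _; rfl
  | succ n ih =>
    intro w hw hm f hf
    have h1 := hm (1 + n) (by omega) f hf
    have hwm := hw (1 + n) (by omega) (by omega)
    have h2 := hKproj (1 + n) f (w (1 + n)) hwm
    have h2' : ∑ x, μ (1 + n) x * w (1 + n) x * (∑ y, P (1 + n) x y * f y)
        = ∑ x, μ (1 + n) x * w (1 + n) x * K (1 + n) f x := by
      have e : ∑ x, (μ (1 + n) x * w (1 + n) x * (∑ y, P (1 + n) x y * f y)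
          - μ (1 + n) x * w (1 + n) x * K (1 + n) f x) = 0 := by
        rw [← h2]; exact Finset.sum_congr rfl fun x _ => by ring
      rw [Finset.sum_sub_distrib] at e; linarith
    have IH := ih w (fun t h1t h2t => hw t h1t (by omega))
      (fun t ht f hf => hm t (by omega) f hf) (K (1 + n) f) (hKmem _ f)
    exact h1.trans (h2'.trans IH)

end Chain


/-- weight size bounded by multi-step backup norm: if the population
weights `w_t ∈ H_t` satisfy the exact matching equations, `w₀ ≡ 1`, and `X₀ = {x₀}` with
`μ₀` the point mass, then for the last level `h = 1 + k` and every `f ∈ H_h`,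
`|⟨w_h, f⟩_{μ_h}| ≤ ‖K₁⋯K_{h−1} f‖_∞`; in particular
`sup{|⟨w_h,f⟩| : f ∈ H_h, ‖f‖_∞ ≤ 1} ≤ ρ_{1:h}`. -/
theorem stmt_13 (X : ℕ → Type) [∀ t, Fintype (X t)] [∀ t, Nonempty (X t)]
    [Unique (X 0)]
    (μ : ∀ t, X t → ℝ)
    (hμ0 : ∀ t x, 0 ≤ μ t x) (hμ1 : ∀ t, ∑ x, μ t x = 1)
    (hμmass : μ 0 default = 1)
    (P : ∀ t, X t → X (t + 1) → ℝ)
    (hP0 : ∀ t x y, 0 ≤ P t x y) (hP1 : ∀ t x, ∑ y, P t x y = 1)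
    (Hs : ∀ t, Submodule ℝ (X t → ℝ))
    (hnorm : ∀ t, ∀ f ∈ Hs t, (∑ x, μ t x * f x ^ 2 = 0) → f = 0)
    (K : ∀ t, (X (t + 1) → ℝ) → (X t → ℝ))
    (hKmem : ∀ t f, K t f ∈ Hs t)
    (hKproj : ∀ t f, ∀ q ∈ Hs t,
      ∑ x, μ t x * ((∑ y, P t x y * f y) - K t f x) * q x = 0)
    (k : ℕ)
    (w : ∀ t, X t → ℝ)
    (hw0 : ∀ x, w 0 x = 1)
    (hwmem : ∀ t, 1 ≤ t → t ≤ 1 + k → w t ∈ Hs t)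
    (hmatch : ∀ t, t + 1 ≤ 1 + k → ∀ f ∈ Hs (t + 1),
      ∑ y, μ (t + 1) y * w (t + 1) y * f y =
        ∑ x, μ t x * w t x * ∑ y, P t x y * f y) :
    (∀ f ∈ Hs (1 + k),
      |∑ y, μ (1 + k) y * w (1 + k) y * f y| ≤ ⨆ x : X 1, |KiterQMMR K 1 k f x|) ∧
    sSup {r : ℝ | ∃ f ∈ Hs (1 + k), (⨆ y, |f y|) ≤ 1 ∧
        r = |∑ y, μ (1 + k) y * w (1 + k) y * f y|} ≤
      sSup {r : ℝ | ∃ f ∈ Hs (1 + k), (⨆ y, |f y|) ≤ 1 ∧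
        r = ⨆ x : X 1, |KiterQMMR K 1 k f x|} := by
  have hKiter1 : ∀ (m : ℕ) (f : X (1 + m) → ℝ), f ∈ Hs (1 + m) → KiterQMMR K 1 m f ∈ Hs 1 :=
    fun m => match m with
    | 0 => fun f hf => hf
    | (n + 1) => fun f _ => Kiter_mem Hs K hKmem 1 n f
  -- Part 1
  have part1 : ∀ f ∈ Hs (1 + k),
      |∑ y, μ (1 + k) y * w (1 + k) y * f y| ≤ ⨆ x : X 1, |KiterQMMR K 1 k f x| := by
    intro f hf
    have hg : KiterQMMR K 1 k f ∈ Hs 1 := hKiter1 k f hf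
    have hchain := chainQMMR μ P Hs K hKmem hKproj k w hwmem hmatch f hf
    have h0 := hmatch 0 (by omega) _ hg
    have h0' : (∑ y : X 1, μ 1 y * w 1 y * KiterQMMR K 1 k f y)
        = ∑ y : X 1, P 0 default y * KiterQMMR K 1 k f y := by
      refine h0.trans ?_
      rw [Fintype.sum_unique, hμmass, hw0, one_mul, one_mul]
    rw [hchain, h0']
    have hb : BddAbove (Set.range fun x : X 1 => |KiterQMMR K 1 k f x|) :=
      Set.Finite.bddAbove (Set.finite_range _)
    have hle : ∀ y : X 1, |KiterQMMR K 1 k f y| ≤ ⨆ x : X 1, |KiterQMMR K 1 k f x| :=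
      fun y => le_ciSup hb y
    calc |∑ y, P 0 default y * KiterQMMR K 1 k f y|
        ≤ ∑ y, |P 0 default y * KiterQMMR K 1 k f y| := Finset.abs_sum_le_sum_abs _ _
      _ = ∑ y, P 0 default y * |KiterQMMR K 1 k f y| := Finset.sum_congr rfl fun y _ => by
          rw [abs_mul, abs_of_nonneg (hP0 0 default y)]
      _ ≤ ∑ y, P 0 default y * ⨆ x : X 1, |KiterQMMR K 1 k f x| := Finset.sum_le_sum fun y _ =>
          mul_le_mul_of_nonneg_left (hle y) (hP0 0 default y)
      _ = ⨆ x : X 1, |KiterQMMR K 1 k f x| := by rw [← Finset.sum_mul, hP1, one_mul]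
  refine ⟨part1, ?_⟩
  -- Part 2
  have hAne : {r : ℝ | ∃ f ∈ Hs (1 + k), (⨆ y, |f y|) ≤ 1 ∧
      r = |∑ y, μ (1 + k) y * w (1 + k) y * f y|}.Nonempty := by
    refine ⟨|∑ y, μ (1 + k) y * w (1 + k) y * (0 : X (1 + k) → ℝ) y|,
      (0 : X (1 + k) → ℝ), zero_mem _, ?_, rfl⟩
    simp
  have hadd := Kiter_add μ P Hs hnorm K hKmem hKproj 1
  have hsmul := Kiter_smul μ P Hs hnorm K hKmem hKproj 1
  classical
  set e : X (1 + k) → (X (1 + k) → ℝ) := fun y z => if z = y then 1 else 0 with he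
  set T : (X (1 + k) → ℝ) →ₗ[ℝ] (X 1 → ℝ) :=
    { toFun := KiterQMMR K 1 k
      map_add' := hadd k
      map_smul' := hsmul k } with hT
  have hBbdd : BddAbove {r : ℝ | ∃ f ∈ Hs (1 + k), (⨆ y, |f y|) ≤ 1 ∧
      r = ⨆ x : X 1, |KiterQMMR K 1 k f x|} := by
    refine ⟨∑ y, ⨆ x : X 1, |T (e y) x|, fun b hb => ?_⟩
    obtain ⟨f, hf, hf1, rfl⟩ := hb
    have hfb : ∀ y, |f y| ≤ 1 := fun y =>
      le_trans (le_ciSup (f := fun y => |f y|)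
        (Set.Finite.bddAbove (Set.finite_range _)) y) hf1
    have hdecomp : f = ∑ y, f y • e y := by
      funext z
      simp only [Finset.sum_apply, Pi.smul_apply, he, smul_eq_mul, mul_ite, mul_one, mul_zero]
      rw [Finset.sum_ite_eq]
      simp
    have hTf : KiterQMMR K 1 k f = ∑ y, f y • T (e y) := by
      show T f = _
      conv_lhs => rw [hdecomp]
      rw [map_sum]
      exact Finset.sum_congr rfl fun y _ => T.map_smul _ _
    refine ciSup_le fun x => ?_
    rw [hTf]
    calc |(∑ y, f y • T (e y)) x| = |∑ y, f y * T (e y) x| := by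
          rw [Finset.sum_apply]; simp
      _ ≤ ∑ y, |f y * T (e y) x| := Finset.abs_sum_le_sum_abs _ _
      _ = ∑ y, |f y| * |T (e y) x| := Finset.sum_congr rfl fun y _ => abs_mul _ _
      _ ≤ ∑ y, 1 * |T (e y) x| := Finset.sum_le_sum fun y _ =>
          mul_le_mul_of_nonneg_right (hfb y) (abs_nonneg _)
      _ = ∑ y, |T (e y) x| := by simp
      _ ≤ ∑ y, ⨆ x' : X 1, |T (e y) x'| := Finset.sum_le_sum fun y _ =>
          le_ciSup (f := fun x' => |T (e y) x'|)
            (Set.Finite.bddAbove (Set.finite_range _)) x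
  refine csSup_le hAne fun a ha => ?_
  obtain ⟨f, hf, hf1, rfl⟩ := ha
  exact (part1 f hf).trans (le_csSup hBbdd ⟨f, hf, hf1, rfl⟩)
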